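/- Let σ > 0, κ ∈ ℝ, and θ, R₁ ∈ ℝ constants. Let A₁ < 0 < A₂ be the two real roots of 2σ²A² − 2κA − 1 = 0, set ω = 2σ²(A₁ − A₂), define A(τ) = A₁A₂(1 − e^{ωτ})/(A₂ − A₁e^{ωτ}), and set ω₁ = 2σ²A₁ − κ. Then (i) ω₁ = ω/2, in particular ω₁ < 0 and ω₁ ≠ ω; and (ii) the function B(τ) := (2/(A₂ − A₁e^{ωτ})) · [ (A₂(A₁θ − R₁)/ω₁)(e^{ω₁τ} − 1) − (A₁(A₂θ − R₁)/(ω₁ − ω))(e^{ω₁τ} − e^{ωτ}) ] satisfies B(0) = 0 and −B′(τ) − κB(τ) + 2σ²A(τ)B(τ) + 2θA(τ) − 2R₁ = 0 for all τ ≥ 0. -/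

import Mathlib

set_option maxHeartbeats 1600000


/-- with constant `θ` and `R₁`, one has `ω₁ = ω/2 < 0`, `ω₁ ≠ ω`, and the
explicit function `B(τ)` solves the linear coefficient equation with `B(0) = 0`. -/
theorem stmt_4 (σ κ θ R₁ : ℝ) (hσ : 0 < σ)
    (A₁ A₂ : ℝ) (hA₁ : A₁ < 0) (hA₂ : 0 < A₂)
    (hroot₁ : 2 * σ ^ 2 * A₁ ^ 2 - 2 * κ * A₁ - 1 = 0)
    (hroot₂ : 2 * σ ^ 2 * A₂ ^ 2 - 2 * κ * A₂ - 1 = 0)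
    (ω : ℝ) (hω : ω = 2 * σ ^ 2 * (A₁ - A₂))
    (A : ℝ → ℝ)
    (hA : ∀ τ, A τ = A₁ * A₂ * (1 - Real.exp (ω * τ)) / (A₂ - A₁ * Real.exp (ω * τ)))
    (ω₁ : ℝ) (hω₁ : ω₁ = 2 * σ ^ 2 * A₁ - κ)
    (B : ℝ → ℝ)
    (hB : ∀ τ, B τ = 2 / (A₂ - A₁ * Real.exp (ω * τ)) *
        (A₂ * (A₁ * θ - R₁) / ω₁ * (Real.exp (ω₁ * τ) - 1)
          - A₁ * (A₂ * θ - R₁) / (ω₁ - ω) * (Real.exp (ω₁ * τ) - Real.exp (ω * τ)))) :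
    (ω₁ = ω / 2 ∧ ω₁ < 0 ∧ ω₁ ≠ ω) ∧
    B 0 = 0 ∧
    ∀ τ, 0 ≤ τ →
      ∃ B' : ℝ, HasDerivAt B B' τ ∧
        -B' - κ * B τ + 2 * σ ^ 2 * A τ * B τ + 2 * θ * A τ - 2 * R₁ = 0 := by
  have hs : (0:ℝ) < σ^2 := by positivity
  have hsub : A₁ - A₂ < 0 := by linarith
  have hκ : κ = σ^2 * (A₁ + A₂) := by
    have h : (A₁ - A₂) * (2*σ^2*(A₁+A₂) - 2*κ) = 0 := by linear_combination hroot₁ - hroot₂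
    rcases mul_eq_zero.1 h with h' | h'
    · exact absurd h' (by linarith)
    · linarith
  have hprod : 2*σ^2*(A₁*A₂) = -1 := by linear_combination (-1)*hroot₁ - 2*A₁*hκ
  have hω1eq : ω₁ = σ^2*(A₁-A₂) := by rw [hω₁, hκ]; ring
  have hωeq : ω = 2*ω₁ := by rw [hω, hω1eq]; ring
  have hω1neg : ω₁ < 0 := by rw [hω1eq]; exact mul_neg_of_pos_of_neg hs hsub
  have hω1ne0 : ω₁ ≠ 0 := ne_of_lt hω1neg
  have hωsub : ω₁ - ω ≠ 0 := by rw [hωeq]; intro h; apply hω1ne0; linarith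
  have hA₁0 : A₁ ≠ 0 := ne_of_lt hA₁
  have hA₂0 : A₂ ≠ 0 := ne_of_gt hA₂
  have hs2 : σ^2 = -(1/(2*(A₁*A₂))) := by
    field_simp
    linear_combination hprod
  have hD : ∀ t:ℝ, 0 < A₂ - A₁ * Real.exp (ω*t) := by
    intro t
    have h1 := Real.exp_pos (ω*t)
    nlinarith
  refine ⟨⟨by rw [hωeq]; ring, hω1neg, by rw [hωeq]; intro h; apply hω1ne0; linarith⟩, ?_, ?_⟩
  · rw [hB]; simp
  · intro τ _
    have hde : HasDerivAt (fun t => Real.exp (ω*t)) (ω * Real.exp (ω*τ)) τ := by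
      simpa [mul_comm, Function.comp_def] using (Real.hasDerivAt_exp (ω*τ)).comp τ ((hasDerivAt_id τ).const_mul ω)
    have hde1 : HasDerivAt (fun t => Real.exp (ω₁*t)) (ω₁ * Real.exp (ω₁*τ)) τ := by
      simpa [mul_comm, Function.comp_def] using (Real.hasDerivAt_exp (ω₁*τ)).comp τ ((hasDerivAt_id τ).const_mul ω₁)
    have hABne : A₁ - A₂ ≠ 0 := ne_of_lt hsub
    have hBfun : B = fun t =>
        (2*(A₂*(A₁*θ-R₁)*(ω₁-ω)*(Real.exp (ω₁*t) - 1)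
          - A₁*(A₂*θ-R₁)*ω₁*(Real.exp (ω₁*t) - Real.exp (ω*t))))
        / ((ω₁*(ω₁-ω))*(A₂ - A₁*Real.exp (ω*t))) := by
      funext t
      rw [hB t]
      field_simp [hω1ne0, hωsub, (hD t).ne']
    have hnum : HasDerivAt (fun t => 2*(A₂*(A₁*θ-R₁)*(ω₁-ω)*(Real.exp (ω₁*t) - 1)
          - A₁*(A₂*θ-R₁)*ω₁*(Real.exp (ω₁*t) - Real.exp (ω*t))))
        (2*(A₂*(A₁*θ-R₁)*(ω₁-ω)*(ω₁*Real.exp (ω₁*τ))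
          - A₁*(A₂*θ-R₁)*ω₁*(ω₁*Real.exp (ω₁*τ) - ω*Real.exp (ω*τ)))) τ := by
      exact (((hde1.sub_const 1).const_mul (A₂*(A₁*θ-R₁)*(ω₁-ω))).sub
        ((hde1.sub hde).const_mul (A₁*(A₂*θ-R₁)*ω₁))).const_mul 2
    have hDd : HasDerivAt (fun t => A₂ - A₁ * Real.exp (ω*t)) (-(A₁ * (ω * Real.exp (ω*τ)))) τ := by
      simpa using (hde.const_mul A₁).const_sub A₂
    have hden : HasDerivAt (fun t => (ω₁*(ω₁-ω))*(A₂ - A₁*Real.exp (ω*t)))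
        ((ω₁*(ω₁-ω))*(-(A₁ * (ω * Real.exp (ω*τ))))) τ := hDd.const_mul _
    have hdenne : (ω₁*(ω₁-ω))*(A₂ - A₁*Real.exp (ω*τ)) ≠ 0 :=
      mul_ne_zero (mul_ne_zero hω1ne0 hωsub) (hD τ).ne'
    have hBd := hnum.div hden hdenne
    simp only [Pi.div_def] at hBd
    rw [← hBfun] at hBd
    refine ⟨_, hBd, ?_⟩
    obtain ⟨w, hwdef⟩ : ∃ w, σ ^ 2 * (A₁ - A₂) = w := ⟨_, rfl⟩
    have hw1 : ω₁ = w := by rw [hω1eq, hwdef]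
    have hw0 : w ≠ 0 := hw1 ▸ hω1ne0
    have hσw : σ ^ 2 = w / (A₁ - A₂) := by rw [← hwdef]; field_simp
    have hu2' : Real.exp (ω * τ) = Real.exp (w * τ) ^ 2 := by
      rw [hωeq, hw1, show 2 * w * τ = w * τ + w * τ by ring, Real.exp_add]; ring
    have hDw : A₂ - A₁ * Real.exp (w * τ) ^ 2 ≠ 0 := by rw [← hu2']; exact (hD τ).ne'
    have hEne : Real.exp (w * τ) ≠ 0 := (Real.exp_pos _).ne'
    have hw2 : w - 2*w ≠ 0 := by intro h; apply hw0; linarith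
    rw [hB, hA, hu2', hωeq, hw1, hκ, hσw]
    field_simp [hABne, hw0, hw2, hDw, hEne]
    ring
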